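/- arXiv:2504.06139 — 2 statements merged into one kernel-verified Lean document; each statement's English description precedes it below -/
import Mathlib

section
/- In a world with perfect PR-boxes, every Boolean function f : {0,1}^n × {0,1}^n → {0,1} can be distributively computed: there exist local strategies using PR-box correlations such that Alice and Bob output bits a, b with a⊕b = f(x,y). -/
private def bToZ (b : Bool) : ZMod 2 := if b then 1 else 0

private def zToB (z : ZMod 2) : Bool := decide (z = 1)

private lemma zToB_bToZ (b : Bool) : zToB (bToZ b) = b := by cases b <;> decide

private lemma bToZ_xor (b c : Bool) : bToZ (Bool.xor b c) = bToZ b + bToZ c := by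
  cases b <;> cases c <;> decide

private lemma xor_zToB (s t : ZMod 2) : Bool.xor (zToB s) (zToB t) = zToB (s + t) := by
  revert s t; decide

/-- With perfect PR-boxes, every Boolean function can be distributively
computed: Alice's box inputs `α x` and output `A x a'` depend only on her
input and box outputs, symmetrically for Bob; the PR-boxes guarantee
`b'ᵢ = a'ᵢ ⊕ (uᵢ · vᵢ)` where `a'` is uniformly random, and the final outputs
always satisfy `a ⊕ b = f(x,y)`. -/
theorem distributed_computation_with_pr_boxes (n : ℕ)
    (f : (Fin n → Bool) → (Fin n → Bool) → Bool) :
    ∃ (m : ℕ) (α β : (Fin n → Bool) → Fin m → Bool)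
      (A B : (Fin n → Bool) → (Fin m → Bool) → Bool),
      ∀ (x y : Fin n → Bool) (a' : Fin m → Bool),
        Bool.xor (A x a')
          (B y (fun i => Bool.xor (a' i) (α x i && β y i))) = f x y := by
  set m := Fintype.card (Fin n → Bool) with hm
  let e : (Fin n → Bool) ≃ Fin m := Fintype.equivFin (Fin n → Bool)
  refine ⟨m, fun x i => decide (e x = i), fun y i => f (e.symm i) y,
    fun _ a' => zToB (∑ i, bToZ (a' i)), fun _ b' => zToB (∑ i, bToZ (b' i)), ?_⟩
  intro x y a'
  rw [xor_zToB, ← Finset.sum_add_distrib]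
  have h1 : ∀ i, bToZ (a' i) + bToZ (Bool.xor (a' i) (decide (e x = i) && f (e.symm i) y))
      = bToZ (decide (e x = i) && f (e.symm i) y) := by
    intro i
    rw [bToZ_xor, ← add_assoc]
    have : bToZ (a' i) + bToZ (a' i) = 0 := by cases a' i <;> decide
    rw [this, zero_add]
  simp only [h1]
  have h2 : (∑ i, bToZ (decide (e x = i) && f (e.symm i) y)) = bToZ (f x y) := by
    rw [Finset.sum_eq_single (e x)]
    · simp
    · intro i _ hi
      have : decide (e x = i) = false := by simp [Ne.symm hi]
      simp [this, bToZ]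
    · simp
  rw [h2, zToB_bToZ]
end

section
/- For the Brunner–Skrzypczyk protocol on two correlated non-local boxes: if P^C_ε = ε P^{PR} + (1−ε) P^C, then CHSH(B²[P^C_ε]) = 3ε − ε² + 2, which is strictly greater than CHSH(P^C_ε) = 2(ε+1) for 0 < ε < 1. -/
noncomputable def PRbox (a b x y : Bool) : ℝ :=
  if Bool.xor a b = (x && y) then 1/2 else 0

noncomputable def corr (P : Bool → Bool → Bool → Bool → ℝ) (x y : Bool) : ℝ :=
  P false false x y + P true true x y - P false true x y - P true false x y

noncomputable def chshS (P : Bool → Bool → Bool → Bool → ℝ) (x y : Bool) : ℝ :=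
  corr P x y + corr P x (!y) + corr P (!x) y - corr P (!x) (!y)

noncomputable def CHSH (P : Bool → Bool → Bool → Bool → ℝ) : ℝ :=
  max (max |chshS P false false| |chshS P false true|)
      (max |chshS P true false| |chshS P true true|)

noncomputable def corrBox (a b x y : Bool) : ℝ :=
  if Bool.xor a b = false then 1/2 else 0

noncomputable def PC (ε : ℝ) (a b x y : Bool) : ℝ :=
  ε * PRbox a b x y + (1 - ε) * corrBox a b x y

/-- The Brunner–Skrzypczyk protocol on two independent copies of a box. -/
noncomputable def BS (P : Bool → Bool → Bool → Bool → ℝ) (a b x y : Bool) : ℝ :=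
  ∑ a₁ : Bool, ∑ b₁ : Bool,
    P a₁ b₁ x y * P (Bool.xor a a₁) (Bool.xor b b₁) (x && a₁) (y && b₁)

/-- For `0 < ε < 1`, the Brunner–Skrzypczyk protocol maps the correlated
non-local box `P^C_ε` (of CHSH value `2(ε+1)`) to a box of CHSH value
`3ε − ε² + 2`, strictly increasing the CHSH value. -/
theorem brunner_skrzypczyk_distills (ε : ℝ) (h0 : 0 < ε) (h1 : ε < 1) :
    CHSH (BS (PC ε)) = 3 * ε - ε ^ 2 + 2 ∧
    CHSH (PC ε) = 2 * (ε + 1) ∧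
    3 * ε - ε ^ 2 + 2 > 2 * (ε + 1) := by
  have hff : chshS (BS (PC ε)) false false = -ε ^ 2 + 3 * ε + 2 := by
    simp [chshS, corr, BS, PC, PRbox, corrBox, Fintype.sum_bool]; ring
  have hft : chshS (BS (PC ε)) false true = ε ^ 2 - 3 * ε + 2 := by
    simp [chshS, corr, BS, PC, PRbox, corrBox, Fintype.sum_bool]; ring
  have htf : chshS (BS (PC ε)) true false = ε ^ 2 - 3 * ε + 2 := by
    simp [chshS, corr, BS, PC, PRbox, corrBox, Fintype.sum_bool]; ring
  have htt : chshS (BS (PC ε)) true true = ε ^ 2 - 3 * ε + 2 := by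
    simp [chshS, corr, BS, PC, PRbox, corrBox, Fintype.sum_bool]; ring
  have pff : chshS (PC ε) false false = 2 * ε + 2 := by
    simp [chshS, corr, PC, PRbox, corrBox]; ring
  have pft : chshS (PC ε) false true = 2 - 2 * ε := by
    simp [chshS, corr, PC, PRbox, corrBox]; ring
  have ptf : chshS (PC ε) true false = 2 - 2 * ε := by
    simp [chshS, corr, PC, PRbox, corrBox]; ring
  have ptt : chshS (PC ε) true true = 2 - 2 * ε := by
    simp [chshS, corr, PC, PRbox, corrBox]; ring
  have a1 : |(-ε ^ 2 + 3 * ε + 2 : ℝ)| = 3 * ε - ε ^ 2 + 2 := by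
    rw [abs_of_pos (by nlinarith)]; ring
  have a2 : |(ε ^ 2 - 3 * ε + 2 : ℝ)| = ε ^ 2 - 3 * ε + 2 := by
    rw [abs_of_nonneg (by nlinarith)]
  have b1 : |(2 * ε + 2 : ℝ)| = 2 * ε + 2 := abs_of_pos (by linarith)
  have b2 : |(2 - 2 * ε : ℝ)| = 2 - 2 * ε := abs_of_pos (by linarith)
  refine ⟨?_, ?_, by nlinarith⟩
  · rw [CHSH, hff, hft, htf, htt, a1, a2]
    rw [max_self, max_eq_left (le_max_right _ _), max_eq_left (by nlinarith)]
  · rw [CHSH, pff, pft, ptf, ptt, b1, b2]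
    rw [max_self, max_eq_left (le_max_right _ _), max_eq_left (by linarith)]
    ring
end
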